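/- Let (Ω, τ) be a compact Hausdorff space and μ a non-negative Radon L^0-valued measure on Ω. If {U_i : i ∈ I} is a directed family of open sets (for every i, j there is k with U_i ∪ U_j ⊆ U_k), then μ(⋃_{i∈I} U_i) = ⋁_{i∈I} μ(U_i) in L^0(m). -/

import Mathlib

open Filter Set Topology Function
open MeasureTheory (Measure IsProbabilityMeasure)

noncomputable section

namespace RNMPaper

variable {X : Type*} [MeasurableSpace X]

/-- The canonical distance on `L⁰(m)`, `d(f,g) = ∫ |f-g| ∧ 1 dm`. -/
def dL0 (m : Measure X) (f g : X →ₘ[m] ℝ) : ℝ := ∫ x, min |f x - g x| 1 ∂m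

/-- Convergence of a sequence in `L⁰(m)` (i.e. convergence in measure). -/
def TendstoL0 (m : Measure X) (f : ℕ → X →ₘ[m] ℝ) (g : X →ₘ[m] ℝ) : Prop :=
  Tendsto (fun n => dL0 m (f n) g) atTop (𝓝 0)

/-- `S` is the sum of the (nonnegative) sequence `f` in `L⁰(m)`: the least upper bound
of the partial sums. -/
def HasL0Sum (m : Measure X) (f : ℕ → X →ₘ[m] ℝ) (S : X →ₘ[m] ℝ) : Prop :=
  IsLUB (Set.range fun n => ∑ i ∈ Finset.range n, f i) S

/-- A random normed module with base probability space `(X, Σ, m)`: an `L⁰(m)`-module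
with an `L⁰`-norm. -/
structure RNMod (m : Measure X) where
  M : Type*
  [grp : AddCommGroup M]
  smul : (X →ₘ[m] ℝ) → M → M
  nrm : M → X →ₘ[m] ℝ
  smul_add : ∀ f v w, smul f (v + w) = smul f v + smul f w
  add_smul : ∀ f g v, smul (f + g) v = smul f v + smul g v
  one_smul : ∀ v, smul 1 v = v
  mul_smul : ∀ f g v, smul (f * g) v = smul f (smul g v)
  nrm_nonneg : ∀ v, 0 ≤ nrm v
  nrm_eq_zero : ∀ v, nrm v = 0 ↔ v = 0
  nrm_add_le : ∀ v w, nrm (v + w) ≤ nrm v + nrm w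
  nrm_smul : ∀ f v, nrm (smul f v) = |f| * nrm v

attribute [instance] RNMod.grp

/-- The distance on a random normed module. -/
def RNMod.dist {m : Measure X} (R : RNMod m) (v w : R.M) : ℝ := dL0 m (R.nrm (v - w)) 0

/-- Completeness of a random normed module: every Cauchy sequence converges. -/
def RNMod.Complete {m : Measure X} (R : RNMod m) : Prop :=
  ∀ v : ℕ → R.M, (∀ ε > (0:ℝ), ∃ N, ∀ p ≥ N, ∀ q ≥ N, R.dist (v p) (v q) < ε) →
    ∃ w : R.M, Tendsto (fun n => R.dist (v n) w) atTop (𝓝 0)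

variable {Ω : Type*}

/-- An `L⁰(m)`-valued measure on the measurable space `Ω` (the values on non-measurable
sets are irrelevant): `μ ∅ = 0` and, for every sequence of pairwise disjoint measurable
sets, the norms `|μ (A n)|` are summable (partial sums order bounded) and the finite
partial sums of `μ (A n)` converge (as a net over finite subsets, in the metric of
`L⁰(m)`) to `μ (⋃ n, A n)`. -/
structure L0Measure (m : Measure X) (Ω : Type*) [MeasurableSpace Ω] where
  toFun : Set Ω → X →ₘ[m] ℝ
  empty' : toFun ∅ = 0
  summable' : ∀ A : ℕ → Set Ω, (∀ n, MeasurableSet (A n)) → Pairwise (Disjoint on A) →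
    BddAbove (Set.range fun n => ∑ i ∈ Finset.range n, |toFun (A i)|)
  additive' : ∀ A : ℕ → Set Ω, (∀ n, MeasurableSet (A n)) → Pairwise (Disjoint on A) →
    Tendsto (fun F : Finset ℕ => dL0 m (∑ i ∈ F, toFun (A i)) (toFun (⋃ n, A n)))
      atTop (𝓝 0)

/-- The collection of all sums `∑ₙ |μ (B n)|` over countable measurable partitions
`(B n)` of `A` (those sums that exist in `L⁰(m)`, as least upper bounds of partial sums). -/
def partitionSums (m : Measure X) [MeasurableSpace Ω] (μ : Set Ω → X →ₘ[m] ℝ) (A : Set Ω) :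
    Set (X →ₘ[m] ℝ) :=
  {g | ∃ B : ℕ → Set Ω, (∀ n, MeasurableSet (B n)) ∧ Pairwise (Disjoint on B) ∧
    (⋃ n, B n) = A ∧ HasL0Sum m (fun n => |μ (B n)|) g}

/-- `t` is the total variation `|μ|(A)` of `μ` on `A`: `t` dominates all partial sums over
all countable measurable partitions of `A` (so each partition sum exists in `L⁰(m)` and is
`≤ t`), and `t` is the least upper bound of the set of partition sums. -/
def HasTV (m : Measure X) [MeasurableSpace Ω] (μ : Set Ω → X →ₘ[m] ℝ) (A : Set Ω)
    (t : X →ₘ[m] ℝ) : Prop :=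
  (∀ B : ℕ → Set Ω, (∀ n, MeasurableSet (B n)) → Pairwise (Disjoint on B) →
    (⋃ n, B n) = A → ∀ n, ∑ i ∈ Finset.range n, |μ (B i)| ≤ t) ∧
  IsLUB (partitionSums m μ A) t

/-- An `L⁰(m)`-valued measure of bounded variation, bundled together with its total
variation `L⁰`-valued measure `tv = |μ|`. -/
structure BVMeasure (m : Measure X) (Ω : Type*) [MeasurableSpace Ω] extends L0Measure m Ω where
  tv : Set Ω → X →ₘ[m] ℝ
  htv : ∀ A, MeasurableSet A → HasTV m toFun A (tv A)



section Aux

variable {X : Type*} [MeasurableSpace X] {m : MeasureTheory.Measure X}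

open MeasureTheory

instance : AddLeftMono (X →ₘ[m] ℝ) := ⟨by
  intro a b c h
  rw [← AEEqFun.coeFn_le] at h ⊢
  filter_upwards [h, AEEqFun.coeFn_add a b, AEEqFun.coeFn_add a c] with x h1 h2 h3
  rw [h2, h3]
  exact add_le_add (le_refl _) h1⟩

instance : AddRightMono (X →ₘ[m] ℝ) := ⟨by
  intro a b c h
  simpa [add_comm] using add_le_add_left (a := a) h⟩

lemma eq_of_dL0_eq_zero [IsProbabilityMeasure m] {f g : X →ₘ[m] ℝ}
    (h : dL0 m f g = 0) : f = g := by
  have hmeas : AEStronglyMeasurable (fun x => min |f x - g x| 1) m := by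
    simp only [← Real.norm_eq_abs]
    exact ((f.aestronglyMeasurable.sub g.aestronglyMeasurable).norm).inf
      aestronglyMeasurable_const
  have hint : Integrable (fun x => min |f x - g x| 1) m := by
    refine (integrable_const (1 : ℝ)).mono' hmeas ?_
    filter_upwards with x
    rw [Real.norm_eq_abs, abs_of_nonneg (le_min (abs_nonneg _) one_pos.le)]
    exact min_le_right _ _
  have hnn : 0 ≤ᵐ[m] fun x => min |f x - g x| 1 := by
    filter_upwards with x
    exact le_min (abs_nonneg _) one_pos.le
  have h0 : (fun x => min |f x - g x| 1) =ᵐ[m] 0 :=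
    (integral_eq_zero_iff_of_nonneg_ae hnn hint).mp h
  refine AEEqFun.ext ?_
  filter_upwards [h0] with x hx
  have hx' : min |f x - g x| 1 = 0 := hx
  rcases le_total |f x - g x| 1 with hle | hle
  · rw [min_eq_left hle] at hx'
    exact sub_eq_zero.mp (abs_eq_zero.mp hx')
  · rw [min_eq_right hle] at hx'
    norm_num at hx'

variable {Ω' : Type*} [MeasurableSpace Ω']

lemma L0Measure.add_of_disjoint [IsProbabilityMeasure m] (μ : L0Measure m Ω') {A B : Set Ω'}
    (hA : MeasurableSet A) (hB : MeasurableSet B) (hAB : Disjoint A B) :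
    μ.toFun (A ∪ B) = μ.toFun A + μ.toFun B := by
  classical
  set C : ℕ → Set Ω' := fun n => if n = 0 then A else if n = 1 then B else ∅ with hC
  have hC0 : C 0 = A := by simp [hC]
  have hC1 : C 1 = B := by simp [hC]
  have hCn : ∀ n : ℕ, 2 ≤ n → C n = ∅ := by
    intro n hn
    simp only [hC]
    rw [if_neg (by omega : ¬ n = 0), if_neg (by omega : ¬ n = 1)]
  have hCmeas : ∀ n, MeasurableSet (C n) := by
    intro n
    by_cases h2 : 2 ≤ n
    · rw [hCn n h2]; exact MeasurableSet.empty
    · interval_cases n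
      · rw [hC0]; exact hA
      · rw [hC1]; exact hB
  have hCdisj : Pairwise (Disjoint on C) := by
    intro i j hij
    simp only [Function.onFun]
    by_cases hi2 : 2 ≤ i
    · rw [hCn i hi2]; exact Set.empty_disjoint _
    · by_cases hj2 : 2 ≤ j
      · rw [hCn j hj2]; exact Set.disjoint_empty _
      · interval_cases i <;> interval_cases j <;> simp_all [hC0, hC1, hAB.symm]
  have hCU : (⋃ n, C n) = A ∪ B := by
    apply Set.Subset.antisymm
    · refine Set.iUnion_subset fun n => ?_
      by_cases h2 : 2 ≤ n
      · rw [hCn n h2]; exact Set.empty_subset _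
      · interval_cases n
        · rw [hC0]; exact Set.subset_union_left
        · rw [hC1]; exact Set.subset_union_right
    · refine Set.union_subset ?_ ?_
      · rw [← hC0]; exact Set.subset_iUnion C 0
      · rw [← hC1]; exact Set.subset_iUnion C 1
  have htend := μ.additive' C hCmeas hCdisj
  rw [hCU] at htend
  have heq : (fun F : Finset ℕ => dL0 m (∑ i ∈ F, μ.toFun (C i)) (μ.toFun (A ∪ B)))
      =ᶠ[atTop] fun _ => dL0 m (μ.toFun A + μ.toFun B) (μ.toFun (A ∪ B)) := by
    filter_upwards [Filter.eventually_ge_atTop ({0, 1} : Finset ℕ)] with F hF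
    have hsum : (∑ i ∈ F, μ.toFun (C i)) = μ.toFun A + μ.toFun B := by
      rw [← Finset.sum_subset hF (by
        intro x _ hx
        have hx0 : x ≠ 0 := by intro h; apply hx; simp [h]
        have hx1 : x ≠ 1 := by intro h; apply hx; simp [h]
        rw [hCn x (by omega), μ.empty'])]
      rw [Finset.sum_pair (by decide : (0 : ℕ) ≠ 1), hC0, hC1]
    rw [hsum]
  have htend' : Tendsto (fun _ : Finset ℕ =>
      dL0 m (μ.toFun A + μ.toFun B) (μ.toFun (A ∪ B))) atTop (𝓝 0) :=
    htend.congr' heq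
  have hz : dL0 m (μ.toFun A + μ.toFun B) (μ.toFun (A ∪ B)) = 0 :=
    tendsto_nhds_unique tendsto_const_nhds htend'
  exact (eq_of_dL0_eq_zero hz).symm

lemma L0Measure.mono [IsProbabilityMeasure m] (μ : L0Measure m Ω')
    (hnn : ∀ A : Set Ω', MeasurableSet A → 0 ≤ μ.toFun A) {A B : Set Ω'}
    (hA : MeasurableSet A) (hB : MeasurableSet B) (hAB : A ⊆ B) :
    μ.toFun A ≤ μ.toFun B := by
  have hdiff : MeasurableSet (B \ A) := hB.diff hA
  have hadd := μ.add_of_disjoint hA hdiff disjoint_sdiff_right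
  rw [Set.union_diff_cancel hAB] at hadd
  rw [hadd]
  exact le_add_of_nonneg_right (hnn _ hdiff)

lemma L0Measure.sum_range [IsProbabilityMeasure m] (μ : L0Measure m Ω') {B : ℕ → Set Ω'}
    (hB : ∀ n, MeasurableSet (B n)) (hd : Pairwise (Disjoint on B)) (n : ℕ) :
    ∑ i ∈ Finset.range n, μ.toFun (B i) = μ.toFun (⋃ i ∈ Finset.range n, B i) := by
  induction n with
  | zero => simp [μ.empty']
  | succ n ih =>
    have hmeasU : MeasurableSet (⋃ i ∈ Finset.range n, B i) :=
      (Finset.range n).measurableSet_biUnion (fun i _ => hB i)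
    have hdisjU : Disjoint (⋃ i ∈ Finset.range n, B i) (B n) := by
      refine Set.disjoint_iUnion₂_left.mpr fun i hi => hd ?_
      exact Nat.ne_of_lt (Finset.mem_range.mp hi)
    have hU : (⋃ i ∈ Finset.range (n + 1), B i) = (⋃ i ∈ Finset.range n, B i) ∪ B n := by
      rw [Finset.range_add_one]
      simp [Set.biUnion_insert, Set.union_comm]
    rw [Finset.sum_range_succ, ih, hU,
      μ.add_of_disjoint hmeasU (hB n) hdisjU]

lemma BVMeasure.tv_eq [IsProbabilityMeasure m] (μ : BVMeasure m Ω')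
    (hnn : ∀ A : Set Ω', MeasurableSet A → 0 ≤ μ.toFun A) {A : Set Ω'}
    (hA : MeasurableSet A) : μ.tv A = μ.toFun A := by
  classical
  obtain ⟨hub, hlub⟩ := μ.htv A hA
  apply le_antisymm
  · -- tv A ≤ μ A : μ A is an upper bound of partitionSums
    apply hlub.2
    rintro g ⟨B, hBmeas, hBdisj, hBU, hgsum⟩
    apply hgsum.2
    rintro s ⟨n, rfl⟩
    have habs : ∀ i, |μ.toFun (B i)| = μ.toFun (B i) := fun i =>
      abs_of_nonneg (hnn _ (hBmeas i))
    calc ∑ i ∈ Finset.range n, |μ.toFun (B i)|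
        = ∑ i ∈ Finset.range n, μ.toFun (B i) := by simp_rw [habs]
      _ = μ.toFun (⋃ i ∈ Finset.range n, B i) :=
          μ.toL0Measure.sum_range hBmeas hBdisj n
      _ ≤ μ.toFun A := by
          refine μ.toL0Measure.mono hnn
            ((Finset.range n).measurableSet_biUnion (fun i _ => hBmeas i)) hA ?_
          rw [← hBU]
          exact Set.iUnion₂_subset fun i _ => Set.subset_iUnion B i
  · -- μ A ≤ tv A : μ A is a partition sum (trivial partition)
    apply hlub.1
    set D : ℕ → Set Ω' := fun n => if n = 0 then A else ∅ with hD
    have hD0 : D 0 = A := by simp [hD]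
    have hDn : ∀ n : ℕ, n ≠ 0 → D n = ∅ := fun n hn => by simp [hD, hn]
    refine ⟨D, ?_, ?_, ?_, ?_⟩
    · intro n
      by_cases hn : n = 0
      · rw [hn, hD0]; exact hA
      · rw [hDn n hn]; exact MeasurableSet.empty
    · intro i j hij
      simp only [Function.onFun]
      by_cases hi : i = 0
      · rw [hDn j (by omega)]; exact Set.disjoint_empty _
      · rw [hDn i hi]; exact Set.empty_disjoint _
    · apply Set.Subset.antisymm
      · refine Set.iUnion_subset fun n => ?_
        by_cases hn : n = 0
        · rw [hn, hD0]
        · rw [hDn n hn]; exact Set.empty_subset _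
      · rw [← hD0]; exact Set.subset_iUnion D 0
    · have hval : ∀ i : ℕ, |μ.toFun (D i)| = if i = 0 then μ.toFun A else 0 := by
        intro i
        by_cases hi : i = 0
        · rw [hi, hD0, if_pos rfl]; exact abs_of_nonneg (hnn _ hA)
        · rw [hDn i hi, if_neg hi, μ.empty', abs_zero]
      have hps : ∀ n : ℕ, (∑ i ∈ Finset.range n, |μ.toFun (D i)|) =
          if 0 < n then μ.toFun A else 0 := by
        intro n
        simp_rw [hval]
        cases n with
        | zero => simp
        | succ n =>
          rw [Finset.sum_ite_eq' (Finset.range (n + 1)) 0 (fun _ => μ.toFun A)]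
          simp
      constructor
      · rintro s ⟨n, rfl⟩
        show (∑ i ∈ Finset.range n, |μ.toFun (D i)|) ≤ μ.toFun A
        rw [hps n]
        split_ifs
        · exact le_refl _
        · exact hnn _ hA
      · intro b hb
        have h1 := hb ⟨1, rfl⟩
        have h2 : (∑ i ∈ Finset.range 1, |μ.toFun (D i)|) ≤ b := h1
        rwa [hps 1, if_pos one_pos] at h2

end Aux

variable {Ωt : Type*} [TopologicalSpace Ωt] [MeasurableSpace Ωt]

/-- Inner regularity of the total variation on open sets by compact sets:
`|μ|(U) = ⋁ {|μ|(K) : K compact, K ⊆ U}` for every open `U`. -/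
def InnerRegularOnOpens (m : Measure X) (μ : BVMeasure m Ωt) : Prop :=
  ∀ U : Set Ωt, IsOpen U →
    IsLUB {g | ∃ K : Set Ωt, IsCompact K ∧ K ⊆ U ∧ g = μ.tv K} (μ.tv U)

/-- Outer regularity of the total variation on Borel sets by open sets:
`|μ|(B) = ⋀ {|μ|(U) : U open, B ⊆ U}` for every Borel `B`. -/
def OuterRegularBorel (m : Measure X) (μ : BVMeasure m Ωt) : Prop :=
  ∀ B : Set Ωt, MeasurableSet B →
    IsGLB {g | ∃ U : Set Ωt, IsOpen U ∧ B ⊆ U ∧ g = μ.tv U} (μ.tv B)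

/-- Inner regularity of the total variation on all Borel sets by compact sets. -/
def InnerRegularBorel (m : Measure X) (μ : BVMeasure m Ωt) : Prop :=
  ∀ B : Set Ωt, MeasurableSet B →
    IsLUB {g | ∃ K : Set Ωt, IsCompact K ∧ K ⊆ B ∧ g = μ.tv K} (μ.tv B)

/-- A Borel `L⁰`-valued measure of bounded variation is Radon if its total variation is
inner regular on open sets by compact sets and outer regular on Borel sets by open sets. -/
def IsRadonL0 (m : Measure X) (μ : BVMeasure m Ωt) : Prop :=
  InnerRegularOnOpens m μ ∧ OuterRegularBorel m μ

/-- **τ-additivity.** Let `Ω` be a compact Hausdorff space and `μ` a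
non-negative Radon `L⁰`-valued measure on `Ω`.  For every directed family `{U i}` of open
sets, `μ (⋃ i, U i) = ⋁ᵢ μ (U i)` in `L⁰(m)`. -/
theorem statement11 {X : Type*} [MeasurableSpace X] (m : Measure X) [IsProbabilityMeasure m]
    {Ω : Type*} [TopologicalSpace Ω] [CompactSpace Ω] [T2Space Ω]
    [MeasurableSpace Ω] [BorelSpace Ω] (μ : BVMeasure m Ω)
    (hnonneg : ∀ A : Set Ω, MeasurableSet A → 0 ≤ μ.toFun A)
    (hRadon : IsRadonL0 m μ)
    {I : Type*} [Nonempty I] (U : I → Set Ω) (hopen : ∀ i, IsOpen (U i))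
    (hdir : ∀ i j, ∃ k, U i ∪ U j ⊆ U k) :
    IsLUB (Set.range fun i => μ.toFun (U i)) (μ.toFun (⋃ i, U i)) := by
  have hVopen : IsOpen (⋃ i, U i) := isOpen_iUnion hopen
  have hVmeas : MeasurableSet (⋃ i, U i) := hVopen.measurableSet
  constructor
  · rintro g ⟨i, rfl⟩
    exact μ.toL0Measure.mono hnonneg (hopen i).measurableSet hVmeas (Set.subset_iUnion U i)
  · intro b hb
    have hreg := hRadon.1 (⋃ i, U i) hVopen
    rw [μ.tv_eq hnonneg hVmeas] at hreg
    apply hreg.2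
    rintro g ⟨K, hK, hKV, rfl⟩
    rw [μ.tv_eq hnonneg hK.isClosed.measurableSet]
    obtain ⟨t, ht⟩ := hK.elim_finite_subcover U hopen hKV
    have hdir' : Directed (· ⊆ ·) U := by
      intro i j
      obtain ⟨k, hk⟩ := hdir i j
      exact ⟨k, (Set.subset_union_left).trans hk, (Set.subset_union_right).trans hk⟩
    obtain ⟨z, hz⟩ := hdir'.finset_le t
    have hKz : K ⊆ U z := ht.trans (Set.iUnion₂_subset hz)
    exact le_trans (μ.toL0Measure.mono hnonneg hK.isClosed.measurableSet
      (hopen z).measurableSet hKz) (hb ⟨z, rfl⟩)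

end RNMPaper
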